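/- (Strict monotonicity of a single Young-Laplace function in its own curvature) Let L > 0, let Γ ≥ 0 and Λ be real with Γ·L + Λ ≥ 0 (non-negative tension), let κ_a, κ_b, R_a, R_b ≥ 0 with κ_a + κ_b + R_a + R_b > 0, and let P, a_a, a_b be real constants. Let C : [−1,1] → ℝ be the scaled comb-area function defined by C(ρ) = (arcsin ρ − ρ·√(1 − ρ²))/ρ² for ρ ≠ 0 and C(0) = 0, and set S(ρ) = (L²/4)·C(ρ). Let I ⊆ (−1, 1) be an interval on which a_a + S(ρ) > 0 and a_b − S(ρ) > 0 for all ρ ∈ I, and define on I the function G(ρ) = 2·Γ·arcsin(ρ) + 2·Λ·ρ/L + (κ_a + κ_b)·S(ρ) − R_a/(S(ρ) + a_a) + R_b/(a_b − S(ρ)) − P. Then G is strictly monotonically increasing on I. -/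

import Mathlib

open Real Set

/-- The scaled comb-area function
`C(ρ) = (arcsin ρ − ρ·√(1 − ρ²))/ρ²` for `ρ ≠ 0`, `C(0) = 0`. -/
noncomputable def combC (ρ : ℝ) : ℝ :=
  if ρ = 0 then 0 else (Real.arcsin ρ - ρ * Real.sqrt (1 - ρ ^ 2)) / ρ ^ 2

noncomputable def Fa (ρ : ℝ) : ℝ := Real.arcsin ρ - ρ * Real.sqrt (1 - ρ ^ 2)

lemma one_sub_sq_pos {x : ℝ} (hx : x ∈ Ioo (-1:ℝ) 1) : 0 < 1 - x ^ 2 := by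
  nlinarith [hx.1, hx.2]

lemma hasDerivAt_sqrt_one_sub_sq {x : ℝ} (hx : x ∈ Ioo (-1:ℝ) 1) :
    HasDerivAt (fun ρ : ℝ => Real.sqrt (1 - ρ ^ 2)) (-x / Real.sqrt (1 - x ^ 2)) x := by
  have hs := one_sub_sq_pos hx
  have hsq : 0 < Real.sqrt (1 - x ^ 2) := Real.sqrt_pos.mpr hs
  have h2 : HasDerivAt (fun ρ : ℝ => 1 - ρ ^ 2) (-(2 * x)) x := by
    simpa using ((hasDerivAt_pow 2 x).const_sub 1)
  have h3 := (Real.hasDerivAt_sqrt hs.ne').comp x h2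
  refine h3.congr_deriv ?_
  symm
  field_simp

lemma hasDerivAt_Fa {x : ℝ} (hx : x ∈ Ioo (-1:ℝ) 1) :
    HasDerivAt Fa (2 * x ^ 2 / Real.sqrt (1 - x ^ 2)) x := by
  have hs := one_sub_sq_pos hx
  have hsq : 0 < Real.sqrt (1 - x ^ 2) := Real.sqrt_pos.mpr hs
  have h1 : HasDerivAt Real.arcsin (1 / Real.sqrt (1 - x ^ 2)) x :=
    Real.hasDerivAt_arcsin (by intro h; rw [h] at hx; exact lt_irrefl _ hx.1)
      (by intro h; rw [h] at hx; exact lt_irrefl _ hx.2)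
  have h4 := (hasDerivAt_id x).mul (hasDerivAt_sqrt_one_sub_sq hx)
  have h5 := h1.sub h4
  refine h5.congr_deriv ?_
  symm
  have hsq2 : Real.sqrt (1 - x ^ 2) ^ 2 = 1 - x ^ 2 := Real.sq_sqrt hs.le
  simp only [id_eq]
  field_simp
  nlinarith [hsq2]

noncomputable def Ha (ρ : ℝ) : ℝ := ρ ^ 3 / Real.sqrt (1 - ρ ^ 2) - Fa ρ

lemma hasDerivAt_cube_div {x : ℝ} (hx : x ∈ Ioo (-1:ℝ) 1) :
    HasDerivAt (fun ρ : ℝ => ρ ^ 3 / Real.sqrt (1 - ρ ^ 2))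
      ((3 * x ^ 2 * Real.sqrt (1 - x ^ 2) - x ^ 3 * (-x / Real.sqrt (1 - x ^ 2)))
        / (Real.sqrt (1 - x ^ 2)) ^ 2) x := by
  have hs := one_sub_sq_pos hx
  have hsq : 0 < Real.sqrt (1 - x ^ 2) := Real.sqrt_pos.mpr hs
  have h1 : HasDerivAt (fun ρ : ℝ => ρ ^ 3) (3 * x ^ 2) x := by
    simpa using hasDerivAt_pow 3 x
  exact h1.div (hasDerivAt_sqrt_one_sub_sq hx) hsq.ne'

lemma hasDerivAt_Ha {x : ℝ} (hx : x ∈ Ioo (-1:ℝ) 1) :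
    HasDerivAt Ha (x ^ 2 / (1 - x ^ 2) / Real.sqrt (1 - x ^ 2)) x := by
  have hs := one_sub_sq_pos hx
  have hsq : 0 < Real.sqrt (1 - x ^ 2) := Real.sqrt_pos.mpr hs
  have hsq2 : Real.sqrt (1 - x ^ 2) ^ 2 = 1 - x ^ 2 := Real.sq_sqrt hs.le
  have h := (hasDerivAt_cube_div hx).sub (hasDerivAt_Fa hx)
  refine h.congr_deriv ?_
  symm
  field_simp
  rw [hsq2]
  ring

lemma Ha_pos {x : ℝ} (hx : x ∈ Ioo (0:ℝ) 1) : 0 < Ha x := by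
  have hmono : StrictMonoOn Ha (Ico (0:ℝ) 1) := by
    apply strictMonoOn_of_deriv_pos (convex_Ico 0 1)
    · apply ContinuousOn.sub
      · apply ContinuousOn.div (by fun_prop)
        · fun_prop
        · intro y hy
          have : (0:ℝ) < 1 - y ^ 2 := by nlinarith [hy.1, hy.2]
          positivity
      · exact (Real.continuous_arcsin.sub (continuous_id.mul
          (Real.continuous_sqrt.comp (by continuity)))).continuousOn
    · intro y hy
      rw [interior_Ico] at hy
      have hy' : y ∈ Ioo (-1:ℝ) 1 := ⟨by linarith [hy.1], hy.2⟩
      rw [(hasDerivAt_Ha hy').deriv]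
      have hs := one_sub_sq_pos hy'
      have hy2 : (0:ℝ) < y ^ 2 := pow_pos hy.1 2
      positivity
  have h0 : Ha 0 = 0 := by
    unfold Ha Fa
    simp
  have := hmono (by constructor <;> [norm_num; norm_num] : (0:ℝ) ∈ Ico (0:ℝ) 1)
    ⟨hx.1.le, hx.2⟩ hx.1
  rwa [h0] at this

lemma Fa_pos {x : ℝ} (hx : x ∈ Ioo (0:ℝ) 1) : 0 < Fa x := by
  have hmono : StrictMonoOn Fa (Ico (0:ℝ) 1) := by
    apply strictMonoOn_of_deriv_pos (convex_Ico 0 1)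
    · exact (Real.continuous_arcsin.sub (continuous_id.mul
        (Real.continuous_sqrt.comp (by continuity)))).continuousOn
    · intro y hy
      rw [interior_Ico] at hy
      have hy' : y ∈ Ioo (-1:ℝ) 1 := ⟨by linarith [hy.1], hy.2⟩
      rw [(hasDerivAt_Fa hy').deriv]
      have hs := one_sub_sq_pos hy'
      have hy2 : (0:ℝ) < y ^ 2 := pow_pos hy.1 2
      positivity
  have h0 : Fa 0 = 0 := by unfold Fa; simp
  have := hmono (by norm_num : (0:ℝ) ∈ Ico (0:ℝ) 1) ⟨hx.1.le, hx.2⟩ hx.1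
  rwa [h0] at this

lemma combC_eq {x : ℝ} (hx : x ≠ 0) : combC x = Fa x / x ^ 2 := by
  unfold combC Fa
  simp [hx]

lemma combC_pos {x : ℝ} (hx : x ∈ Ioo (0:ℝ) 1) : 0 < combC x := by
  rw [combC_eq hx.1.ne']
  exact div_pos (Fa_pos hx) (pow_pos hx.1 2)

lemma combC_odd (x : ℝ) : combC (-x) = -combC x := by
  unfold combC
  by_cases h : x = 0
  · simp [h]
  · simp only [neg_eq_zero, h, if_false]
    rw [Real.arcsin_neg]
    ring_nf

lemma combC_strictMonoOn_pos : StrictMonoOn combC (Ioo (0:ℝ) 1) := by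
  apply strictMonoOn_of_deriv_pos (convex_Ioo 0 1)
  · apply ContinuousOn.congr (f := fun x => Fa x / x ^ 2)
    · apply ContinuousOn.div
      · exact (Real.continuous_arcsin.sub (continuous_id.mul
          (Real.continuous_sqrt.comp (by continuity)))).continuousOn
      · fun_prop
      · intro y hy; exact (pow_pos hy.1 2).ne'
    · intro y hy; exact combC_eq hy.1.ne'
  · intro y hy
    rw [interior_Ioo] at hy
    have hy' : y ∈ Ioo (-1:ℝ) 1 := ⟨by linarith [hy.1], hy.2⟩
    have hy0 : 0 < y := hy.1
    have hs := one_sub_sq_pos hy'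
    have hsq : 0 < Real.sqrt (1 - y ^ 2) := Real.sqrt_pos.mpr hs
    have hder : HasDerivAt combC
        ((2 * y ^ 2 / Real.sqrt (1 - y ^ 2) * y ^ 2 - Fa y * (2 * y)) / (y ^ 2) ^ 2) y := by
      have h1 : HasDerivAt (fun ρ : ℝ => Fa ρ / ρ ^ 2)
          ((2 * y ^ 2 / Real.sqrt (1 - y ^ 2) * y ^ 2 - Fa y * (2 * y)) / (y ^ 2) ^ 2) y := by
        have := (hasDerivAt_Fa hy').div (hasDerivAt_pow 2 y) (pow_pos hy0 2).ne'
        exact this.congr_deriv (by norm_num)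
      apply h1.congr_of_eventuallyEq
      filter_upwards [eventually_ne_nhds hy0.ne'] with z hz
      exact combC_eq hz
    rw [hder.deriv]
    have hnum : 0 < 2 * y ^ 2 / Real.sqrt (1 - y ^ 2) * y ^ 2 - Fa y * (2 * y) := by
      have hH := Ha_pos hy
      unfold Ha at hH
      have : Fa y < y ^ 3 / Real.sqrt (1 - y ^ 2) := by linarith
      have h2 : Fa y * (2 * y) < y ^ 3 / Real.sqrt (1 - y ^ 2) * (2 * y) :=
        (mul_lt_mul_of_pos_right this (by linarith))
      have h3 : y ^ 3 / Real.sqrt (1 - y ^ 2) * (2 * y)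
          = 2 * y ^ 2 / Real.sqrt (1 - y ^ 2) * y ^ 2 := by
        field_simp
      linarith [h3 ▸ h2]
    have hden : (0:ℝ) < (y ^ 2) ^ 2 := by positivity
    positivity

lemma combC_strictMonoOn : StrictMonoOn combC (Ioo (-1:ℝ) 1) := by
  intro x hx y hy hxy
  rcases lt_trichotomy x 0 with hx0 | hx0 | hx0
  · rcases lt_trichotomy y 0 with hy0 | hy0 | hy0
    · have h := combC_strictMonoOn_pos ⟨neg_pos.mpr hy0, by linarith [hy.1]⟩
        ⟨neg_pos.mpr hx0, by linarith [hx.1]⟩ (by linarith)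
      rw [combC_odd, combC_odd] at h
      linarith
    · subst hy0
      have h := combC_pos (x := -x) ⟨neg_pos.mpr hx0, by linarith [hx.1]⟩
      rw [combC_odd] at h
      have h0 : combC 0 = 0 := by unfold combC; simp
      linarith
    · have h1 := combC_pos (x := -x) ⟨neg_pos.mpr hx0, by linarith [hx.1]⟩
      rw [combC_odd] at h1
      have h2 := combC_pos (x := y) ⟨hy0, hy.2⟩
      linarith
  · subst hx0
    have h0 : combC 0 = 0 := by unfold combC; simp
    have h2 := combC_pos (x := y) ⟨hxy, hy.2⟩
    linarith
  · exact combC_strictMonoOn_pos ⟨hx0, hx.2⟩ ⟨by linarith, hy.2⟩ hxy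

lemma arcsin_gap {x y : ℝ} (hx : x ∈ Ioo (-1:ℝ) 1) (hy : y ∈ Ioo (-1:ℝ) 1) (hxy : x ≤ y) :
    y - x ≤ Real.arcsin y - Real.arcsin x := by
  have hmono : MonotoneOn (fun ρ => Real.arcsin ρ - ρ) (Icc (-1:ℝ) 1) := by
    apply monotoneOn_of_deriv_nonneg (convex_Icc _ _)
    · exact (Real.continuous_arcsin.sub continuous_id).continuousOn
    · intro z hz
      rw [interior_Icc] at hz
      exact ((Real.hasDerivAt_arcsin (by linarith [hz.1]) (by linarith [hz.2])).sub
        (hasDerivAt_id' (x := z))).differentiableAt.differentiableWithinAt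
    · intro z hz
      rw [interior_Icc] at hz
      have hs := one_sub_sq_pos hz
      have hsq : 0 < Real.sqrt (1 - z ^ 2) := Real.sqrt_pos.mpr hs
      rw [HasDerivAt.deriv (f := fun ρ => Real.arcsin ρ - ρ) ((Real.hasDerivAt_arcsin (by linarith [hz.1]) (by linarith [hz.2])).sub
        (hasDerivAt_id' (x := z)))]
      have hle : Real.sqrt (1 - z ^ 2) ≤ 1 :=
        Real.sqrt_le_one.mpr (by nlinarith [hz.1, hz.2])
      have : 1 ≤ 1 / Real.sqrt (1 - z ^ 2) := one_le_one_div hsq hle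
      linarith
  have := hmono ⟨hx.1.le, hx.2.le⟩ ⟨hy.1.le, hy.2.le⟩ hxy
  simp only at this
  linarith

/-- Strict monotonicity of a single Young-Laplace function of an edge in its own
normalized curvature: with chord length `L > 0`, non-negative tension
(`Γ ≥ 0`, `Γ·L + Λ ≥ 0`), non-negative area-constraint and osmotic coefficients
(not all zero), and the comb area `S(ρ) = (L²/4)·C(ρ)` such that both cell areas
`a_a + S(ρ)` and `a_b − S(ρ)` stay positive on an interval `I ⊆ (−1, 1)`, the
Young-Laplace function
`G(ρ) = 2Γ·arcsin ρ + 2Λρ/L + (κ_a + κ_b)·S(ρ) − R_a/(S(ρ) + a_a) + R_b/(a_b − S(ρ)) − P`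
is strictly monotonically increasing on `I`. -/
theorem youngLaplace_strictMonoOn
    (L Γ Λ κa κb Ra Rb P aa ab : ℝ)
    (hL : 0 < L) (hΓ : 0 ≤ Γ) (htension : 0 ≤ Γ * L + Λ)
    (hκa : 0 ≤ κa) (hκb : 0 ≤ κb) (hRa : 0 ≤ Ra) (hRb : 0 ≤ Rb)
    (hpos : 0 < κa + κb + Ra + Rb)
    (S : ℝ → ℝ) (hS : ∀ ρ, S ρ = L ^ 2 / 4 * combC ρ)
    (I : Set ℝ) (hIsub : I ⊆ Set.Ioo (-1 : ℝ) 1) (hIconn : I.OrdConnected)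
    (harea : ∀ ρ ∈ I, 0 < aa + S ρ ∧ 0 < ab - S ρ)
    (G : ℝ → ℝ)
    (hG : ∀ ρ, G ρ = 2 * Γ * Real.arcsin ρ + 2 * Λ * ρ / L
      + (κa + κb) * S ρ - Ra / (S ρ + aa) + Rb / (ab - S ρ) - P) :
    StrictMonoOn G I := by
  intro x hx y hy hxy
  have hx' := hIsub hx
  have hy' := hIsub hy
  have hL2 : (0:ℝ) < L ^ 2 / 4 := by positivity
  have hSlt : S x < S y := by
    rw [hS x, hS y]
    exact mul_lt_mul_of_pos_left (combC_strictMonoOn hx' hy' hxy) hL2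
  obtain ⟨hax, hbx⟩ := harea x hx
  obtain ⟨hay, hby⟩ := harea y hy
  have hT : 2 * Γ * Real.arcsin x + 2 * Λ * x / L ≤ 2 * Γ * Real.arcsin y + 2 * Λ * y / L := by
    have hgap := arcsin_gap hx' hy' hxy.le
    have h1 : Γ * (y - x) ≤ Γ * (Real.arcsin y - Real.arcsin x) :=
      mul_le_mul_of_nonneg_left hgap hΓ
    have h2 : 0 ≤ (Γ * L + Λ) * (y - x) := mul_nonneg htension (by linarith)
    have h3 : -(Γ * (y - x)) ≤ Λ * (y - x) / L := by
      rw [le_div_iff₀ hL]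
      nlinarith
    have h4 : 2 * Λ * y / L - 2 * Λ * x / L = 2 * (Λ * (y - x) / L) := by ring
    linarith
  have hRaterm : Ra / (S y + aa) ≤ Ra / (S x + aa) :=
    div_le_div_of_nonneg_left hRa (by linarith) (by linarith)
  have hRbterm : Rb / (ab - S x) ≤ Rb / (ab - S y) :=
    div_le_div_of_nonneg_left hRb (by linarith) (by linarith)
  have hκS : (κa + κb) * S x ≤ (κa + κb) * S y :=
    mul_le_mul_of_nonneg_left hSlt.le (by linarith)
  rw [hG x, hG y]
  by_cases hκ : 0 < κa + κb
  · have : (κa + κb) * S x < (κa + κb) * S y := mul_lt_mul_of_pos_left hSlt hκ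
    linarith
  · have hκ0 : κa + κb = 0 := le_antisymm (not_lt.mp hκ) (by linarith)
    by_cases hRa' : 0 < Ra
    · have : Ra / (S y + aa) < Ra / (S x + aa) :=
        div_lt_div_of_pos_left hRa' (by linarith) (by linarith)
      linarith
    · have hRb' : 0 < Rb := by
        have : Ra = 0 := le_antisymm (not_lt.mp hRa') hRa
        linarith
      have : Rb / (ab - S x) < Rb / (ab - S y) :=
        div_lt_div_of_pos_left hRb' (by linarith) (by linarith)
      linarith
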